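/- Let n ≥ 1, let G be a finite set, let g : Fin n → G assign each agent a group, and for each pair (g₁,g₂) ∈ G × G let W^{g₁g₂} be an n × n real matrix with nonnegative entries whose row sums are at most 1. Let α : G × G → ℝ be nonnegative, φ : Fin n → ℝ, γ : G × ℕ → ℝ, R ≥ 1 an integer, and let F : ℝ → ℝ be differentiable with derivative f ≥ 0. Suppose there are constants M_g ≥ 0 with ∑_{t=1}^R f(v − γ(g,t)) ≤ M_g for every g ∈ G and every v ∈ ℝ, and a constant κ < 1 such that ∑_{g′∈G} α(g,g′)·M_g ≤ κ for every g ∈ G. Define L : ℝⁿ → ℝⁿ by L(u)_i = ∑_{t=1}^R F( ∑_{g′∈G} α(g_i, g′)·(W^{g_i g′} u)_i + φ_i − γ(g_i, t) ). Then L is Lipschitz with constant κ with respect to the supremum norm on ℝⁿ, and L has a unique fixed point u* ∈ ℝⁿ (i.e., there is exactly one u* with L(u*) = u*). -/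

import Mathlib

open Finset

/-- Contraction-mapping result for the rational-expectations operator `L`: under
row-normalized nonnegative network matrices, nonnegative peer effects, and the bound
`∑_{g'} α(g,g')·M_g ≤ κ < 1`, the map `L` is `κ`-Lipschitz in the supremum norm and
has a unique fixed point. -/
theorem rational_expectations_unique_fixed_point
    (n : ℕ) (hn : 1 ≤ n) {G : Type*} [Fintype G]
    (g : Fin n → G) (W : G → G → Matrix (Fin n) (Fin n) ℝ)
    (hWpos : ∀ g₁ g₂ : G, ∀ i j : Fin n, 0 ≤ W g₁ g₂ i j)
    (hWrow : ∀ g₁ g₂ : G, ∀ i : Fin n, ∑ j, W g₁ g₂ i j ≤ 1)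
    (α : G → G → ℝ) (hα : ∀ g₁ g₂ : G, 0 ≤ α g₁ g₂)
    (φ : Fin n → ℝ) (γ : G → ℕ → ℝ) (R : ℕ) (hR : 1 ≤ R)
    (F f : ℝ → ℝ) (hF : ∀ x : ℝ, HasDerivAt F (f x) x) (hf0 : ∀ x, 0 ≤ f x)
    (M : G → ℝ) (hM0 : ∀ g' : G, 0 ≤ M g')
    (hMbound : ∀ (g' : G) (v : ℝ), ∑ t ∈ Finset.Icc 1 R, f (v - γ g' t) ≤ M g')
    (κ : ℝ) (hκ : κ < 1)
    (hκbound : ∀ g' : G, ∑ g'' : G, α g' g'' * M g' ≤ κ)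
    (L : (Fin n → ℝ) → (Fin n → ℝ))
    (hL : ∀ (u : Fin n → ℝ) (i : Fin n),
      L u i = ∑ t ∈ Finset.Icc 1 R,
        F ((∑ g'' : G, α (g i) g'' * Matrix.mulVec (W (g i) g'') u i)
            + φ i - γ (g i) t)) :
    (∀ u v : Fin n → ℝ, ‖L u - L v‖ ≤ κ * ‖u - v‖) ∧
      ∃! uStar : Fin n → ℝ, L uStar = uStar := by
  have hκ0 : 0 ≤ κ :=
    le_trans (Finset.sum_nonneg fun g'' _ => mul_nonneg (hα _ _) (hM0 _)) (hκbound (g ⟨0, hn⟩))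
  have key : ∀ u v : Fin n → ℝ, ∀ i : Fin n, |L u i - L v i| ≤ κ * ‖u - v‖ := by
    intro u v i
    set c := ∑ g'' : G, α (g i) g'' * Matrix.mulVec (W (g i) g'') u i with hc
    set d := ∑ g'' : G, α (g i) g'' * Matrix.mulVec (W (g i) g'') v i with hd
    set H : ℝ → ℝ := fun s => ∑ t ∈ Finset.Icc 1 R, F (s + φ i - γ (g i) t) with hH
    have hHderiv : ∀ s : ℝ,
        HasDerivAt H (∑ t ∈ Finset.Icc 1 R, f (s + φ i - γ (g i) t)) s := by
      intro s
      apply HasDerivAt.fun_sum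
      intro t _
      have h1 : HasDerivAt (fun s : ℝ => s + φ i - γ (g i) t) 1 s := by
        simpa using ((hasDerivAt_id s).add_const (φ i)).sub_const (γ (g i) t)
      simpa [Function.comp_def] using (hF (s + φ i - γ (g i) t)).comp s h1
    have hLu : L u i = H c := by rw [hL]
    have hLv : L v i = H d := by rw [hL]
    have hderivbound : ∀ s : ℝ,
        ‖∑ t ∈ Finset.Icc 1 R, f (s + φ i - γ (g i) t)‖ ≤ M (g i) := by
      intro s
      rw [Real.norm_eq_abs, abs_of_nonneg (Finset.sum_nonneg fun t _ => hf0 _)]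
      exact hMbound (g i) (s + φ i)
    have hMVT : ‖H c - H d‖ ≤ M (g i) * ‖c - d‖ := by
      apply Convex.norm_image_sub_le_of_norm_hasDerivWithin_le
        (fun x _ => (hHderiv x).hasDerivWithinAt) (fun x _ => hderivbound x)
        convex_univ (Set.mem_univ d) (Set.mem_univ c)
    -- bound on c - d
    have hW : ∀ g'' : G, |Matrix.mulVec (W (g i) g'') (u - v) i| ≤ ‖u - v‖ := by
      intro g''
      have h1 : |Matrix.mulVec (W (g i) g'') (u - v) i|
          ≤ ∑ j, W (g i) g'' i j * |(u - v) j| := by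
        rw [Matrix.mulVec, dotProduct]
        refine le_trans (Finset.abs_sum_le_sum_abs _ _) (Finset.sum_le_sum fun j _ => ?_)
        rw [abs_mul, abs_of_nonneg (hWpos _ _ i j)]
      refine h1.trans ?_
      calc ∑ j, W (g i) g'' i j * |(u - v) j|
          ≤ ∑ j, W (g i) g'' i j * ‖u - v‖ := by
            refine Finset.sum_le_sum fun j _ => ?_
            exact mul_le_mul_of_nonneg_left
              (by simpa [Real.norm_eq_abs] using norm_le_pi_norm (u - v) j) (hWpos _ _ i j)
        _ = (∑ j, W (g i) g'' i j) * ‖u - v‖ := by rw [Finset.sum_mul]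
        _ ≤ 1 * ‖u - v‖ := mul_le_mul_of_nonneg_right (hWrow _ _ i) (norm_nonneg _)
        _ = ‖u - v‖ := one_mul _
    have hcd : |c - d| ≤ (∑ g'' : G, α (g i) g'') * ‖u - v‖ := by
      have : c - d = ∑ g'' : G, α (g i) g'' * Matrix.mulVec (W (g i) g'') (u - v) i := by
        rw [hc, hd, ← Finset.sum_sub_distrib]
        refine Finset.sum_congr rfl fun g'' _ => ?_
        rw [Matrix.mulVec_sub]
        ring_nf
        simp [Pi.sub_apply, mul_sub]
      rw [this, Finset.sum_mul]
      refine le_trans (Finset.abs_sum_le_sum_abs _ _) (Finset.sum_le_sum fun g'' _ => ?_)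
      rw [abs_mul, abs_of_nonneg (hα _ _)]
      exact mul_le_mul_of_nonneg_left (hW g'') (hα _ _)
    rw [hLu, hLv, ← Real.norm_eq_abs]
    refine hMVT.trans ?_
    rw [Real.norm_eq_abs]
    calc M (g i) * |c - d| ≤ M (g i) * ((∑ g'' : G, α (g i) g'') * ‖u - v‖) :=
          mul_le_mul_of_nonneg_left hcd (hM0 _)
      _ = (∑ g'' : G, α (g i) g'' * M (g i)) * ‖u - v‖ := by
          simp only [Finset.mul_sum, Finset.sum_mul]
          exact Finset.sum_congr rfl fun _ _ => by ring
      _ ≤ κ * ‖u - v‖ :=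
          mul_le_mul_of_nonneg_right (hκbound (g i)) (norm_nonneg _)
  have hLip : ∀ u v : Fin n → ℝ, ‖L u - L v‖ ≤ κ * ‖u - v‖ := by
    intro u v
    rw [pi_norm_le_iff_of_nonneg (mul_nonneg hκ0 (norm_nonneg _))]
    intro i
    simpa [Real.norm_eq_abs] using key u v i
  refine ⟨hLip, ?_⟩
  have hlw : LipschitzWith ⟨κ, hκ0⟩ L := by
    refine LipschitzWith.of_dist_le_mul fun u v => ?_
    rw [dist_eq_norm, dist_eq_norm]
    exact hLip u v
  have hcontr : ContractingWith ⟨κ, hκ0⟩ L := ⟨by exact_mod_cast hκ, hlw⟩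
  exact ⟨hcontr.fixedPoint L, hcontr.fixedPoint_isFixedPt,
    fun y hy => hcontr.fixedPoint_unique hy⟩
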